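/- Let N ≥ 1, let A be an N×N real matrix with nonnegative entries and zero diagonal whose associated digraph (edge from j to i iff A_{ij} > 0) is strongly connected, and let L = D − A be the Laplacian. Then there exists a vector ω ∈ ℝ^N with all entries strictly positive and Σ_i ω_i = 1 such that ωᵀ L = 0; that is, ω is a positive left eigenvector of L associated with the zero eigenvalue. -/
import Mathlib
open Matrix


/-- For the Laplacian `L = D - A` of a strongly connected weighted
digraph (nonnegative adjacency matrix `A`, zero diagonal, edge from `j` to `i` iff
`A i j > 0`), there is a strictly positive left eigenvector `ω` of `L` for the zero
eigenvalue, normalized so that its entries sum to `1`. -/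
theorem laplacian_positive_left_eigenvector
    (N : ℕ) (hN : 1 ≤ N) (A : Matrix (Fin N) (Fin N) ℝ)
    (hnonneg : ∀ i j, 0 ≤ A i j) (hdiag : ∀ i, A i i = 0)
    (hsc : ∀ i j : Fin N, Relation.ReflTransGen (fun a b => 0 < A b a) i j)
    (L : Matrix (Fin N) (Fin N) ℝ)
    (hL : L = Matrix.diagonal (fun i => ∑ j, A i j) - A) :
    ∃ ω : Fin N → ℝ, (∀ i, 0 < ω i) ∧ (∑ i, ω i = 1) ∧ Matrix.vecMul ω L = 0 := by
  set d : Fin N → ℝ := fun i => ∑ j, A i j with hd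
  have hdnn : ∀ i, 0 ≤ d i := fun i => Finset.sum_nonneg fun j _ => hnonneg i j
  -- entrywise formula for vecMul
  have hvm : ∀ (w : Fin N → ℝ) (j : Fin N),
      Matrix.vecMul w L j = w j * d j - ∑ i, w i * A i j := by
    intro w j
    simp only [hL, Matrix.vecMul, dotProduct, Matrix.sub_apply, mul_sub,
      Finset.sum_sub_distrib]
    congr 1
    rw [Finset.sum_eq_single j]
    · simp [Matrix.diagonal_apply_eq]
    · intro b _ hb; simp [Matrix.diagonal_apply_ne _ hb]
    · intro h; exact absurd (Finset.mem_univ j) h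
  -- the all-ones vector is a right null vector, so det L = 0
  have h1 : L *ᵥ (fun _ => (1:ℝ)) = 0 := by
    ext i
    simp only [hL, Matrix.mulVec, dotProduct, Matrix.sub_apply, mul_one,
      Finset.sum_sub_distrib, Pi.zero_apply]
    rw [Finset.sum_eq_single i]
    · simp [Matrix.diagonal_apply_eq, hd]
    · intro b _ hb; simp [Matrix.diagonal_apply_ne' _ hb]
    · intro h; exact absurd (Finset.mem_univ i) h
  have hdet : L.det = 0 := by
    rw [← Matrix.exists_mulVec_eq_zero_iff]
    refine ⟨fun _ => (1:ℝ), ?_, h1⟩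
    intro h
    have := congrFun h ⟨0, hN⟩
    simp at this
  -- get a nonzero left null vector v
  have hdetT : Lᵀ.det = 0 := by rwa [Matrix.det_transpose]
  obtain ⟨v, hv0, hv⟩ := (Matrix.exists_mulVec_eq_zero_iff).2 hdetT
  rw [Matrix.mulVec_transpose] at hv
  -- equation at each column
  have heq : ∀ j, v j * d j = ∑ i, v i * A i j := by
    intro j
    have := congrFun hv j
    rw [hvm] at this
    simpa [sub_eq_zero] using this
  -- μ = |v| is also a left null vector
  set μ : Fin N → ℝ := fun i => |v i| with hμ
  have hμnn : ∀ i, 0 ≤ μ i := fun i => abs_nonneg _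
  set g : Fin N → ℝ := fun j => (∑ i, μ i * A i j) - μ j * d j with hg
  have hgnn : ∀ j, 0 ≤ g j := by
    intro j
    have h1 : μ j * d j = |v j * d j| := by
      rw [abs_mul, abs_of_nonneg (hdnn j)]
    have h2 : |v j * d j| ≤ ∑ i, μ i * A i j := by
      rw [heq j]
      calc |∑ i, v i * A i j| ≤ ∑ i, |v i * A i j| := Finset.abs_sum_le_sum_abs _ _
        _ = ∑ i, μ i * A i j := by
            refine Finset.sum_congr rfl fun i _ => ?_
            rw [abs_mul, abs_of_nonneg (hnonneg i j)]
    simp only [hg, sub_nonneg]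
    rw [h1]; exact h2
  have hgsum : ∑ j, g j = 0 := by
    simp only [hg, Finset.sum_sub_distrib]
    rw [Finset.sum_comm]
    simp [hd, Finset.mul_sum]
  have hgzero : ∀ j, g j = 0 := by
    intro j
    have := (Finset.sum_eq_zero_iff_of_nonneg (fun i _ => hgnn i)).1 hgsum
    exact this j (Finset.mem_univ j)
  have hμeq : ∀ j, μ j * d j = ∑ i, μ i * A i j := by
    intro j
    have := hgzero j
    simp only [hg, sub_eq_zero] at this
    exact this.symm
  -- zero entries propagate along edges
  have hstep : ∀ j i, μ j = 0 → 0 < A i j → μ i = 0 := by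
    intro j i hj hA
    have hsum : ∑ k, μ k * A k j = 0 := by rw [← hμeq j, hj, zero_mul]
    have := (Finset.sum_eq_zero_iff_of_nonneg
      (fun k _ => mul_nonneg (hμnn k) (hnonneg k j))).1 hsum i (Finset.mem_univ i)
    rcases mul_eq_zero.1 this with h | h
    · exact h
    · exact absurd h (ne_of_gt hA)
  have hprop : ∀ j i, μ j = 0 → Relation.ReflTransGen (fun a b => 0 < A b a) j i → μ i = 0 := by
    intro j i hj hrel
    induction hrel with
    | refl => exact hj
    | tail _ hedge ih => exact hstep _ _ ih hedge
  -- μ is strictly positive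
  have hμpos : ∀ i, 0 < μ i := by
    intro i
    rcases lt_or_eq_of_le (hμnn i) with h | h
    · exact h
    · exfalso
      obtain ⟨k, hk⟩ := Function.ne_iff.1 hv0
      have hk' : μ k ≠ 0 := fun hc => hk (abs_eq_zero.1 hc)
      exact hk' (hprop i k h.symm (hsc i k))
  -- normalize
  set S : ℝ := ∑ i, μ i with hS
  have hSpos : 0 < S := Finset.sum_pos (fun i _ => hμpos i) ⟨⟨0, hN⟩, Finset.mem_univ _⟩
  refine ⟨fun i => μ i / S, fun i => div_pos (hμpos i) hSpos, ?_, ?_⟩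
  · rw [← Finset.sum_div, ← hS, div_self (ne_of_gt hSpos)]
  · ext j
    rw [hvm]
    have : ∀ i, μ i / S * A i j = (μ i * A i j) / S := fun i => by ring
    simp only [this, ← Finset.sum_div, ← hμeq j, Pi.zero_apply]
    ring
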